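/- Let L be a Lie algebra over ℝ with a basis (X_i)_{i ∈ Fin n}, and let D be a Lie derivation of L with D X_i = ((i : ℕ) + 1) • X_i for every i ∈ Fin n (so the eigenvalue of X_i is i in 1-based labelling, i.e. the derivation has eigenvalue type 1 < 2 < ... < n). If for some i, j, k ∈ Fin n the coefficient of X_k in the basis expansion of ⁅X_i, X_j⁆ is nonzero, then (k : ℕ) + 1 = ((i : ℕ) + 1) + ((j : ℕ) + 1); in 1-based labels, k = i + j. In particular the index set of nonzero structure constants consists only of triples of the form (i, j, i + j). -/

import Mathlib

theorem ordered_derivation_index_set (n : ℕ) (L : Type*)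
    [LieRing L] [LieAlgebra ℝ L] (b : Module.Basis (Fin n) ℝ L)
    (D : LieDerivation ℝ L L)
    (hD : ∀ i : Fin n, D (b i) = (((i : ℕ) + 1 : ℝ)) • b i)
    (i j k : Fin n) (h : (b.repr ⁅b i, b j⁆) k ≠ 0) :
    (k : ℕ) + 1 = ((i : ℕ) + 1) + ((j : ℕ) + 1) := by
  set x := ⁅b i, b j⁆ with hxdef
  have h1 : D x = ((((i : ℕ) + 1 : ℝ)) + (((j : ℕ) + 1 : ℝ))) • x := by
    rw [hxdef, LieDerivation.apply_lie_eq_add, hD, hD, smul_lie, lie_smul, add_smul]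
    module
  have h2 : D x = ∑ m, (b.repr x m) • (((m : ℕ) + 1 : ℝ)) • b m := by
    conv_lhs => rw [← b.sum_repr x]
    rw [map_sum]
    simp [hD]
  have h3 : b.repr (D x) k = (((k : ℕ) + 1 : ℝ)) * b.repr x k := by
    rw [h2, map_sum]
    simp only [map_sum, Finsupp.finset_sum_apply, map_smul, Module.Basis.repr_self, Finsupp.smul_apply, Finsupp.single_apply,
      smul_eq_mul]
    rw [Finset.sum_eq_single k]
    · simp; ring
    · intro m _ hm; simp [hm]
    · simp
  have h4 : b.repr (D x) k = ((((i : ℕ) + 1 : ℝ)) + (((j : ℕ) + 1 : ℝ))) * b.repr x k := by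
    rw [h1, map_smul]; simp
  have h5 : (((k : ℕ) + 1 : ℝ)) = (((i : ℕ) + 1 : ℝ)) + (((j : ℕ) + 1 : ℝ)) :=
    mul_right_cancel₀ h (h3 ▸ h4)
  exact_mod_cast h5
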